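/- arXiv:2112.11792 — 2 statements merged into one kernel-verified Lean document; each statement's English description precedes it below -/
import Mathlib

section
/- Let Tr : F_{q^n} → F_q denote the field trace. Then the set { Tr(x)/x : x ∈ F_{q^n}, x ≠ 0 } has exactly q^{n−1} + 1 elements. -/
/-- the set `{Tr(x)/x : x ∈ F_{q^n}^*}` has exactly `q^{n-1} + 1` elements. -/
theorem trace_directions_card
    (q n : ℕ) (hq : ∃ p m : ℕ, Nat.Prime p ∧ 0 < m ∧ q = p ^ m) (hn : 2 ≤ n)
    (Fq F : Type*) [Field Fq] [Field F] [Algebra Fq F] [Fintype Fq] [Fintype F]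
    (hcardq : Fintype.card Fq = q) (hcardF : Fintype.card F = q ^ n) :
    ({z : F | ∃ x : F, x ≠ 0 ∧
        z = algebraMap Fq F (Algebra.trace Fq F x) / x}).ncard = q ^ (n - 1) + 1 := by
  classical
  obtain ⟨p, m, hp, hm, rfl⟩ := hq
  set q := p ^ m with hqdef
  have hq2 : 2 ≤ q := by
    calc 2 ≤ p := hp.two_le
    _ ≤ p ^ m := Nat.le_self_pow hm.ne' p
  haveI : Module.Finite Fq F := Module.Finite.of_finite
  haveI : Algebra.IsSeparable Fq F := inferInstance
  have hrank : Module.finrank Fq F = n := by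
    have h := Module.card_eq_pow_finrank (K := Fq) (V := F)
    rw [hcardq, hcardF] at h
    exact (Nat.pow_right_injective hq2 h.symm)
  set T : F →ₗ[Fq] Fq := Algebra.trace Fq F with hT
  have hTsurj : Function.Surjective T := Algebra.trace_surjective Fq F
  have hinj : Function.Injective (algebraMap Fq F) := (algebraMap Fq F).injective
  -- kernel dimension
  have hker : Module.finrank Fq (LinearMap.ker T) = n - 1 := by
    have h := LinearMap.finrank_range_add_finrank_ker T
    rw [hrank, LinearMap.range_eq_top.mpr hTsurj, finrank_top, Module.finrank_self] at h
    omega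
  have hkercard : Fintype.card (LinearMap.ker T) = q ^ (n - 1) := by
    rw [Module.card_eq_pow_finrank (K := Fq) (V := LinearMap.ker T), hcardq, hker]
  set g : F → F := fun x => algebraMap Fq F (T x) / x with hg
  set Ω : Finset F := Finset.univ.filter (fun x : F => x ≠ 0) with hΩ
  set I : Finset F := Ω.image g with hI
  have hset : {z : F | ∃ x : F, x ≠ 0 ∧ z = algebraMap Fq F (Algebra.trace Fq F x) / x}
      = ↑I := by
    ext z
    simp only [hI, Finset.coe_image, Set.mem_image, Finset.mem_coe, hΩ, Finset.mem_filter,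
      Finset.mem_univ, true_and, Set.mem_setOf_eq, hg]
    constructor
    · rintro ⟨x, hx, rfl⟩; exact ⟨x, hx, rfl⟩
    · rintro ⟨x, hx, rfl⟩; exact ⟨x, hx, rfl⟩
  rw [hset, Set.ncard_coe_finset]
  -- cardinality of Ω
  have hΩcard : Ω.card = q ^ n - 1 := by
    rw [hΩ, Finset.filter_ne', Finset.card_erase_of_mem (Finset.mem_univ 0),
      Finset.card_univ, hcardF]
  -- fiber over 0
  have hzero_mem : (0 : F) ∈ I := by
    have h1 : 1 ≤ q ^ (n - 1) := Nat.one_le_pow _ _ (by omega)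
    have : 2 ≤ Fintype.card (LinearMap.ker T) := by
      rw [hkercard]
      calc 2 ≤ q := hq2
      _ = q ^ 1 := (pow_one q).symm
      _ ≤ q ^ (n - 1) := Nat.pow_le_pow_right (by omega) (by omega)
    obtain ⟨x, hx⟩ := Fintype.exists_ne_of_one_lt_card (by omega) (0 : LinearMap.ker T)
    refine Finset.mem_image.mpr ⟨x, ?_, ?_⟩
    · simp only [hΩ, Finset.mem_filter, Finset.mem_univ, true_and]
      exact fun h => hx (Subtype.ext h)
    · have : T (x : F) = 0 := x.2
      simp [hg, this]
  have hfiber0 : (Ω.filter (fun x => g x = 0)).card = q ^ (n - 1) - 1 := by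
    have heq : Ω.filter (fun x => g x = 0)
        = (Finset.univ.filter (fun x : F => T x = 0)).erase 0 := by
      ext x
      simp only [hΩ, Finset.mem_filter, Finset.mem_univ, true_and, Finset.mem_erase, hg,
        div_eq_zero_iff, map_eq_zero]
      tauto
    have hcards : Fintype.card {x : F // T x = 0} = q ^ (n - 1) := by
      rw [← hkercard]
      exact Fintype.card_congr (Equiv.subtypeEquivRight (fun x => (LinearMap.mem_ker).symm)).symm
    rw [heq, Finset.card_erase_of_mem (by simp), ← Fintype.card_subtype, hcards]
  -- fiber over nonzero z
  have hfiberz : ∀ z ∈ I, z ≠ 0 → (Ω.filter (fun x => g x = z)).card = q - 1 := by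
    intro z hz hz0
    obtain ⟨x₀, hx₀Ω, hx₀⟩ := Finset.mem_image.mp hz
    have hx₀ne : x₀ ≠ 0 := by
      simpa only [hΩ, Finset.mem_filter, Finset.mem_univ, true_and] using hx₀Ω
    have hTx₀ : T x₀ ≠ 0 := by
      intro h; apply hz0; rw [← hx₀, hg]; simp [h]
    have hzx₀ : algebraMap Fq F (T x₀) = z * x₀ := by
      rw [← hx₀]; simp only [hg]; field_simp
    have hcard : (Finset.univ.filter (fun c : Fq => c ≠ 0)).card = q - 1 := by
      rw [Finset.filter_ne', Finset.card_erase_of_mem (Finset.mem_univ 0),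
        Finset.card_univ, hcardq]
    rw [← hcard]
    apply Finset.card_bij (fun x _ => T x)
    · intro x hx
      simp only [Finset.mem_filter, Finset.mem_univ, true_and]
      obtain ⟨hxΩ, hgx⟩ := Finset.mem_filter.mp hx
      have hxne : x ≠ 0 := by
        simpa only [hΩ, Finset.mem_filter, Finset.mem_univ, true_and] using hxΩ
      intro h
      apply hz0
      rw [← hgx, hg]; simp [h]
    · intro x hx y hy hxy
      obtain ⟨hxΩ, hgx⟩ := Finset.mem_filter.mp hx
      obtain ⟨hyΩ, hgy⟩ := Finset.mem_filter.mp hy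
      have hxne : x ≠ 0 := by
        simpa only [hΩ, Finset.mem_filter, Finset.mem_univ, true_and] using hxΩ
      have hyne : y ≠ 0 := by
        simpa only [hΩ, Finset.mem_filter, Finset.mem_univ, true_and] using hyΩ
      have h1 : algebraMap Fq F (T x) = z * x := by rw [← hgx]; simp only [hg]; field_simp
      have h2 : algebraMap Fq F (T y) = z * y := by rw [← hgy]; simp only [hg]; field_simp
      rw [hxy, h2] at h1
      exact mul_left_cancel₀ hz0 h1.symm
    · intro c hc
      have hcne : c ≠ 0 := by
        simpa only [Finset.mem_filter, Finset.mem_univ, true_and] using hc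
      refine ⟨(c / T x₀) • x₀, ?_, ?_⟩
      · have hne : (c / T x₀) • x₀ ≠ 0 := by
          apply smul_ne_zero _ hx₀ne
          exact div_ne_zero hcne hTx₀
        refine Finset.mem_filter.mpr ⟨?_, ?_⟩
        · simp only [hΩ, Finset.mem_filter, Finset.mem_univ, true_and]; exact hne
        · have hTv : T ((c / T x₀) • x₀) = c := by
            rw [map_smul, smul_eq_mul, div_mul_cancel₀ _ hTx₀]
          rw [hg]
          simp only [hTv]
          rw [Algebra.smul_def, map_div₀, hzx₀]
          have ha : (algebraMap Fq F) c ≠ 0 := (map_ne_zero (algebraMap Fq F)).mpr hcne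
          field_simp
      · rw [map_smul, smul_eq_mul, div_mul_cancel₀ _ hTx₀]
  -- assemble
  have hsum : Ω.card = ∑ z ∈ I, (Ω.filter (fun x => g x = z)).card :=
    Finset.card_eq_sum_card_fiberwise (fun x hx => Finset.mem_image_of_mem g hx)
  rw [← Finset.add_sum_erase _ _ hzero_mem] at hsum
  have hsum2 : ∑ z ∈ I.erase 0, (Ω.filter (fun x => g x = z)).card
      = (I.erase 0).card * (q - 1) := by
    rw [Finset.sum_congr rfl (fun z hz => hfiberz z (Finset.mem_of_mem_erase hz)
      (Finset.ne_of_mem_erase hz)), Finset.sum_const, smul_eq_mul]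
  rw [hsum2, hfiber0, hΩcard] at hsum
  have hIcard : I.card = (I.erase 0).card + 1 := by
    rw [Finset.card_erase_of_mem hzero_mem]
    have : 1 ≤ I.card := Finset.card_pos.mpr ⟨0, hzero_mem⟩
    omega
  have hpow : q ^ n = q ^ (n - 1) * q := by
    rw [← pow_succ]; congr 1; omega
  have hkey : (I.erase 0).card = q ^ (n - 1) := by
    have h1 : 1 ≤ q ^ (n - 1) := Nat.one_le_pow _ _ (by omega)
    have h2 : (I.erase 0).card * (q - 1) = q ^ (n - 1) * (q - 1) := by
      have h3 : q ^ (n - 1) * (q - 1) + q ^ (n - 1) = q ^ (n - 1) * q := by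
        rw [← Nat.mul_succ]; congr 1; omega
      set A := (I.erase 0).card * (q - 1) with hA
      set B := q ^ (n - 1) * (q - 1) with hB
      set C := q ^ (n - 1) with hC
      rw [hpow] at hsum
      omega
    exact Nat.eq_of_mul_eq_mul_right (by omega) h2
  rw [hIcard, hkey]
end

section
/- Let f be an F_q-linear map on F_{q^n} and let B_f = G_f ∪ D_f where G_f = {⟨(x, f(x), 1)⟩ : x ∈ F_{q^n}} and D_f = {⟨(x, f(x), 0)⟩ : x ∈ F_{q^n}^*}. Then every line ℓ of PG(2, q^n) satisfies |ℓ ∩ B_f| ≡ 1 (mod q); in particular B_f is a blocking set (every line meets it). -/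
open Submodule Finset

/-- every line of `PG(2,q^n)` meets `B_f = G_f ∪ D_f` in a number of
points congruent to `1` modulo `q`; in particular `B_f` is a blocking set. -/
theorem Bf_blocking_mod_q
    (q n : ℕ) (hq : ∃ p m : ℕ, Nat.Prime p ∧ 0 < m ∧ q = p ^ m) (hn : 2 ≤ n)
    (Fq F : Type*) [Field Fq] [Field F] [Algebra Fq F] [Fintype Fq] [Fintype F]
    (hcardq : Fintype.card Fq = q) (hcardF : Fintype.card F = q ^ n)
    (f : F →ₗ[Fq] F) :
    ∀ ℓ : Submodule F (F × F × F), Module.finrank F ℓ = 2 →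
      (({Q : Submodule F (F × F × F) |
          ((∃ x : F, Q = Submodule.span F {(x, f x, (1 : F))}) ∨
            (∃ x : F, x ≠ 0 ∧ Q = Submodule.span F {(x, f x, (0 : F))})) ∧ Q ≤ ℓ}).ncard
          ≡ 1 [MOD q])
      ∧ ∃ Q : Submodule F (F × F × F),
          ((∃ x : F, Q = Submodule.span F {(x, f x, (1 : F))}) ∨
            (∃ x : F, x ≠ 0 ∧ Q = Submodule.span F {(x, f x, (0 : F))})) ∧ Q ≤ ℓ := by
  classical
  intro ℓ hℓ
  have hq2 : 2 ≤ q := by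
    obtain ⟨p, m, hp, hm, rfl⟩ := hq
    calc 2 ≤ p := hp.two_le
    _ ≤ p ^ m := Nat.le_self_pow (by omega) p
  -- the injective algebra map
  have halg : Function.Injective (algebraMap Fq F) := (algebraMap Fq F).injective
  -- finrank Fq F = n
  have hfrF : Module.finrank Fq F = n := by
    have h := Module.card_eq_pow_finrank (K := Fq) (V := F)
    rw [hcardq, hcardF] at h
    exact (Nat.pow_right_injective hq2 h.symm)
  -- the Fq-linear map whose range is U
  let g : (F × Fq) →ₗ[Fq] (F × F × F) :=
  { toFun := fun v => (v.1, f v.1, algebraMap Fq F v.2)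
    map_add' := by intro a b; simp [Prod.ext_iff, map_add]
    map_smul' := by
      intro c v
      have hf : f (algebraMap Fq F c * v.1) = algebraMap Fq F c * f v.1 := by
        rw [← Algebra.smul_def, ← Algebra.smul_def]; exact map_smul f c v.1
      simp [Prod.ext_iff, smul_eq_mul, map_mul, Algebra.smul_def, hf] }
  have hginj : Function.Injective g := by
    intro a b hab
    have hab' : (a.1, f a.1, algebraMap Fq F a.2) = (b.1, f b.1, algebraMap Fq F b.2) := hab
    rw [Prod.mk.injEq, Prod.mk.injEq] at hab'
    exact Prod.ext_iff.mpr ⟨hab'.1, halg hab'.2.2⟩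
  set U : Submodule Fq (F × F × F) := LinearMap.range g with hU
  have hmemU : ∀ v : F × F × F, v ∈ U ↔ ∃ x : F, ∃ c : Fq, (x, f x, algebraMap Fq F c) = v := by
    intro v
    constructor
    · rintro ⟨⟨x, c⟩, rfl⟩; exact ⟨x, c, rfl⟩
    · rintro ⟨x, c, rfl⟩; exact ⟨(x, c), rfl⟩
  have hfrU : Module.finrank Fq U = n + 1 := by
    rw [hU, LinearMap.finrank_range_of_inj hginj]
    simp [Module.finrank_prod, hfrF]
  set ℓ' : Submodule Fq (F × F × F) := ℓ.restrictScalars Fq with hℓ'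
  have hfrℓ' : Module.finrank Fq ℓ' = 2 * n := by
    have h1 : Module.finrank Fq ℓ' = Module.finrank Fq ℓ :=
      LinearEquiv.finrank_eq
        ((Submodule.restrictScalarsEquiv Fq F (F × F × F) ℓ).restrictScalars Fq)
    have h2 : Module.finrank Fq F * Module.finrank F ℓ = Module.finrank Fq ℓ :=
      Module.finrank_mul_finrank Fq F ℓ
    rw [h1, ← h2, hfrF, hℓ]; ring
  have hfrtot : Module.finrank Fq (F × F × F) = 3 * n := by
    simp [Module.finrank_prod, hfrF]; ring
  -- the intersection is nonzero
  have hinf : 1 ≤ Module.finrank Fq ↥(U ⊓ ℓ') := by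
    have h1 := Submodule.finrank_sup_add_finrank_inf_eq U ℓ'
    have h2 : Module.finrank Fq ↥(U ⊔ ℓ') ≤ 3 * n := hfrtot ▸ Submodule.finrank_le (U ⊔ ℓ')
    rw [hfrU, hfrℓ'] at h1
    omega
  have hne : ∃ v : F × F × F, v ∈ U ⊓ ℓ' ∧ v ≠ 0 := by
    by_contra h
    push_neg at h
    have : U ⊓ ℓ' = ⊥ := by
      rw [Submodule.eq_bot_iff]; intro v hv; by_contra hv0; exact hv0 (h v hv)
    rw [this, finrank_bot] at hinf; omega
  obtain ⟨v₀, hv₀, hv₀0⟩ := hne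
  -- key: a nonzero vector of U spans a point of B_f
  have key : ∀ v : F × F × F, v ∈ U → v ≠ 0 →
      (∃ x : F, Submodule.span F {v} = Submodule.span F {(x, f x, (1 : F))}) ∨
      (∃ x : F, x ≠ 0 ∧ Submodule.span F {v} = Submodule.span F {(x, f x, (0 : F))}) := by
    intro v hv hvne
    obtain ⟨x, c, rfl⟩ := (hmemU v).mp hv
    by_cases hc : c = 0
    · right
      refine ⟨x, ?_, by rw [hc, map_zero]⟩
      rintro rfl
      apply hvne
      simp [hc]
    · left
      refine ⟨c⁻¹ • x, ?_⟩
      have hco : (algebraMap Fq F c) ≠ 0 := fun h => hc (halg (h.trans (map_zero _).symm))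
      have hcc : ∀ y : F, (algebraMap Fq F c) * (algebraMap Fq F c⁻¹ * y) = y := by
        intro y
        rw [← mul_assoc, ← map_mul, mul_inv_cancel₀ hc, map_one, one_mul]
      have hveq : (x, f x, algebraMap Fq F c)
          = (algebraMap Fq F c) • ((c⁻¹ • x, f (c⁻¹ • x), (1 : F)) : F × F × F) := by
        show _ = ((algebraMap Fq F c) • (c⁻¹ • x), (algebraMap Fq F c) • f (c⁻¹ • x),
          (algebraMap Fq F c) • (1 : F))
        have hf : f (c⁻¹ • x) = c⁻¹ • f x := map_smul f c⁻¹ x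
        rw [hf, Prod.mk.injEq, Prod.mk.injEq]
        refine ⟨?_, ?_, ?_⟩
        · rw [Algebra.smul_def c⁻¹ x, smul_eq_mul, hcc x]
        · rw [Algebra.smul_def c⁻¹ (f x), smul_eq_mul, hcc (f x)]
        · rw [smul_eq_mul, mul_one]
      rw [hveq]
      exact Submodule.span_singleton_smul_eq (IsUnit.mk0 _ hco) _
  -- key2 : points of B_f on ℓ give nonzero vectors of U ⊓ ℓ'
  have key2 : ∀ Q : Submodule F (F × F × F),
      ((∃ x : F, Q = Submodule.span F {(x, f x, (1 : F))}) ∨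
        (∃ x : F, x ≠ 0 ∧ Q = Submodule.span F {(x, f x, (0 : F))})) → Q ≤ ℓ →
      ∃ v : F × F × F, v ∈ U ⊓ ℓ' ∧ v ≠ 0 ∧ Submodule.span F {v} = Q := by
    intro Q hQ hQℓ
    rcases hQ with ⟨x, rfl⟩ | ⟨x, hx, rfl⟩
    · refine ⟨(x, f x, 1), ⟨?_, ?_⟩, ?_, rfl⟩
      · exact (hmemU _).mpr ⟨x, 1, by rw [map_one]⟩
      · exact hQℓ (Submodule.mem_span_singleton_self _)
      · intro h
        rw [Prod.ext_iff, Prod.ext_iff] at h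
        exact one_ne_zero h.2.2
    · refine ⟨(x, f x, 0), ⟨?_, ?_⟩, ?_, rfl⟩
      · exact (hmemU _).mpr ⟨x, 0, by rw [map_zero]⟩
      · exact hQℓ (Submodule.mem_span_singleton_self _)
      · intro h
        rw [Prod.ext_iff] at h
        exact hx h.1
  -- the counting
  set T : Submodule Fq (F × F × F) := U ⊓ ℓ' with hT
  set s : Finset (F × F × F) := (Set.toFinset (T : Set (F × F × F))).erase 0 with hs
  have hmems : ∀ v : F × F × F, v ∈ s ↔ v ≠ 0 ∧ v ∈ T := by
    intro v; simp [hs, Finset.mem_erase, Set.mem_toFinset]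
  set φ : F × F × F → Submodule F (F × F × F) := fun v => Submodule.span F {v} with hφ
  set t : Finset (Submodule F (F × F × F)) := s.image φ with ht
  -- the point set equals ↑t
  have hseteq : {Q : Submodule F (F × F × F) |
      ((∃ x : F, Q = Submodule.span F {(x, f x, (1 : F))}) ∨
        (∃ x : F, x ≠ 0 ∧ Q = Submodule.span F {(x, f x, (0 : F))})) ∧ Q ≤ ℓ} = ↑t := by
    ext Q
    simp only [Set.mem_setOf_eq, ht, Finset.coe_image, Set.mem_image, Finset.mem_coe]
    constructor
    · rintro ⟨hQ, hQℓ⟩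
      obtain ⟨v, hvT, hvne, hvQ⟩ := key2 Q hQ hQℓ
      exact ⟨v, (hmems v).mpr ⟨hvne, hvT⟩, hvQ⟩
    · rintro ⟨v, hvs, rfl⟩
      obtain ⟨hvne, hvT⟩ := (hmems v).mp hvs
      refine ⟨key v hvT.1 hvne, ?_⟩
      rw [hφ]
      exact Submodule.span_le.mpr (Set.singleton_subset_iff.mpr hvT.2)
  -- cardinality of subspaces: powers of q
  have hcardsub : ∀ W : Submodule Fq (F × F × F),
      Fintype.card W = q ^ Module.finrank Fq W := by
    intro W
    rw [← hcardq]
    exact Module.card_eq_pow_finrank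
  have hdvd : ∀ W : Submodule Fq (F × F × F), (∃ w : F × F × F, w ∈ W ∧ w ≠ 0) →
      q ∣ Fintype.card W := by
    intro W ⟨w, hw, hw0⟩
    rw [hcardsub W]
    refine dvd_pow_self q ?_
    intro hzero
    have : Module.finrank Fq W = 0 := hzero
    have hbot : W = ⊥ := Submodule.finrank_eq_zero.mp this
    rw [hbot] at hw
    exact hw0 (Submodule.mem_bot Fq |>.mp hw)
  -- s.card = card T - 1
  have hscard : s.card = Fintype.card T - 1 := by
    rw [hs, Finset.card_erase_of_mem (by simp [Set.mem_toFinset]), Set.toFinset_card]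
    rfl
  -- fiberwise counting
  have hfib := Finset.card_eq_sum_card_fiberwise
    (f := φ) (s := s) (t := t) (fun v hv => Finset.mem_image_of_mem φ hv)
  -- each fiber has cardinality ≡ -1 mod q
  have hfibcard : ∀ Q ∈ t, ((s.filter (fun v => φ v = Q)).card : ZMod q) = -1 := by
    intro Q hQ
    obtain ⟨w, hws, hwQ⟩ := Finset.mem_image.mp hQ
    obtain ⟨hwne, hwT⟩ := (hmems w).mp hws
    set TQ : Submodule Fq (F × F × F) := T ⊓ Q.restrictScalars Fq with hTQ
    have hwTQ : w ∈ TQ := ⟨hwT, by rw [← hwQ]; exact Submodule.mem_span_singleton_self w⟩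
    have hfil : s.filter (fun v => φ v = Q) = (Set.toFinset (TQ : Set (F × F × F))).erase 0 := by
      ext u
      simp only [Finset.mem_filter, Finset.mem_erase, Set.mem_toFinset]
      constructor
      · rintro ⟨hus, huQ⟩
        obtain ⟨hune, huT⟩ := (hmems u).mp hus
        refine ⟨hune, huT, ?_⟩
        show u ∈ Q
        rw [← huQ]
        exact Submodule.mem_span_singleton_self u
      · rintro ⟨hune, huT, huQ⟩
        refine ⟨(hmems u).mpr ⟨hune, huT⟩, ?_⟩
        -- u ∈ Q = span {w}, u ≠ 0 ⇒ span {u} = Q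
        have hspan : Submodule.span F {w} = Q := hwQ
        have huw : u ∈ Submodule.span F {w} := by rw [hspan]; exact huQ
        obtain ⟨c, rfl⟩ := Submodule.mem_span_singleton.mp huw
        have hc : c ≠ 0 := by rintro rfl; simp at hune
        show Submodule.span F {c • w} = Q
        rw [← hspan]
        exact Submodule.span_singleton_smul_eq (IsUnit.mk0 c hc) w
    rw [hfil, Finset.card_erase_of_mem (by simp [Set.mem_toFinset]), Set.toFinset_card]
    have h1 : 1 ≤ Fintype.card ((TQ : Set (F × F × F))) := Fintype.card_pos
    have hdq : q ∣ Fintype.card ((TQ : Set (F × F × F))) := hdvd TQ ⟨w, hwTQ, hwne⟩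
    rw [Nat.cast_sub h1, Nat.cast_one, (ZMod.natCast_eq_zero_iff _ _).mpr hdq]
    ring
  -- total count in ZMod q
  have hcount : ((t.card : ZMod q)) = 1 := by
    have h1 : ((s.card : ℕ) : ZMod q) = -1 := by
      rw [hscard]
      have h2 : 1 ≤ Fintype.card T := Fintype.card_pos
      have hdq : q ∣ Fintype.card T := hdvd T ⟨v₀, hv₀, hv₀0⟩
      rw [Nat.cast_sub h2, Nat.cast_one, (ZMod.natCast_eq_zero_iff _ _).mpr hdq]
      ring
    have h3 : ((∑ Q ∈ t, (s.filter (fun v => φ v = Q)).card : ℕ) : ZMod q)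
        = ∑ Q ∈ t, ((s.filter (fun v => φ v = Q)).card : ZMod q) := by push_cast; ring
    rw [hfib, h3, Finset.sum_congr rfl hfibcard, Finset.sum_const, nsmul_eq_mul] at h1
    have : (t.card : ZMod q) * (-1) = -1 := h1
    have h4 : -(t.card : ZMod q) = -1 := by linear_combination this
    exact neg_injective h4
  constructor
  · rw [hseteq, Set.ncard_coe_finset]
    have := (ZMod.natCast_eq_natCast_iff t.card 1 q).mp (by rw [hcount, Nat.cast_one])
    exact this
  · refine ⟨φ v₀, ?_⟩
    have : φ v₀ ∈ ({Q : Submodule F (F × F × F) |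
      ((∃ x : F, Q = Submodule.span F {(x, f x, (1 : F))}) ∨
        (∃ x : F, x ≠ 0 ∧ Q = Submodule.span F {(x, f x, (0 : F))})) ∧ Q ≤ ℓ}) := by
      rw [hseteq]
      exact Finset.mem_coe.mpr (Finset.mem_image_of_mem φ ((hmems v₀).mpr ⟨hv₀0, hv₀⟩))
    exact this
end
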